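/- Let G be a finite group not isomorphic to any elementary abelian 2-group, and suppose the number i_2(G) of elements of order at most 2 satisfies i_2(G) = (3/4)·|G|. Then G is isomorphic to D₈ × C₂ᵏ for some k ≥ 0, where D₈ is the dihedral group of order 8. -/

import Mathlib

open Finset

private lemma miller_key {G : Type*} [Group G] [Fintype G] [DecidableEq G]
    (heq : 4 * (univ.filter (fun x : G => x ^ 2 = 1)).card = 3 * Fintype.card G)
    {y : G} (hy : y ^ 2 ≠ 1) :
    (∀ z : G, z ^ 2 ≠ 1 → z * y = y * z ∧ z ^ 2 = y ^ 2) ∧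
      ∃ a : G, a ^ 2 = 1 ∧ ¬ a * y = y * a := by
  classical
  set S : Finset G := univ.filter (fun x : G => x ^ 2 = 1) with hSdef
  have hmemS : ∀ x : G, x ∈ S ↔ x ^ 2 = 1 := by
    intro x; simp [hSdef]
  set n := Fintype.card G with hndef
  have hn4 : 4 ∣ n := by
    refine (Nat.Coprime.dvd_of_dvd_mul_left (show Nat.Coprime 4 3 by norm_num) ?_)
    exact ⟨S.card, by omega⟩
  obtain ⟨m, hm⟩ := hn4
  have hnpos : 0 < n := Fintype.card_pos
  have hmpos : 0 < m := by omega
  have hs : S.card = 3 * m := by omega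
  -- the set of x with x ∈ S and y * x ∈ S
  set T : Finset G := S ∩ S.image (fun x => y⁻¹ * x) with hTdef
  have hmemT : ∀ x : G, x ∈ T ↔ x ∈ S ∧ y * x ∈ S := by
    intro x
    simp only [hTdef, mem_inter, mem_image]
    constructor
    · rintro ⟨h1, x', hx', rfl⟩
      exact ⟨h1, by simpa using hx'⟩
    · rintro ⟨h1, h2⟩
      exact ⟨h1, ⟨y * x, h2, by simp⟩⟩
  have hTcard : 2 * m ≤ T.card := by
    have himg : (S.image (fun x => y⁻¹ * x)).card = S.card :=
      card_image_of_injective _ (mul_right_injective y⁻¹)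
    have h1 := card_inter_add_card_union S (S.image (fun x => y⁻¹ * x))
    rw [← hTdef] at h1
    have h2 : (S ∪ S.image (fun x => y⁻¹ * x)).card ≤ n := card_le_univ _
    omega
  -- basic involution helpers
  have hinv : ∀ x : G, x ^ 2 = 1 → (y * x) ^ 2 = 1 → x * y * x = y⁻¹ := by
    intro x hx hyx
    have h1 : y * (x * y * x) = 1 := by
      have : (y * x) * (y * x) = 1 := by rw [← pow_two]; exact hyx
      calc y * (x * y * x) = (y * x) * (y * x) := by simp [mul_assoc]
        _ = 1 := this
    exact (eq_inv_of_mul_eq_one_right h1)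
  obtain ⟨x₀, hx₀⟩ : T.Nonempty := by
    apply card_pos.mp; omega
  have hx₀S : x₀ ^ 2 = 1 := ((hmemS _).mp ((hmemT _).mp hx₀).1)
  have hx₀yS : (y * x₀) ^ 2 = 1 := ((hmemS _).mp ((hmemT _).mp hx₀).2)
  have hx₀inv : x₀ * y * x₀ = y⁻¹ := hinv _ hx₀S hx₀yS
  have hx₀x₀ : x₀ * x₀ = 1 := by rw [← pow_two]; exact hx₀S
  -- x₀ does not commute with y
  have hx₀nc : ¬ x₀ * y = y * x₀ := by
    intro hc
    apply hy
    have h1 : x₀ * y * x₀ = y := by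
      rw [hc, mul_assoc, hx₀x₀, mul_one]
    have h2 : y = y⁻¹ := by rw [← hx₀inv, h1]
    rw [pow_two]
    exact mul_eq_one_iff_eq_inv.mpr h2
  -- the centralizer of y as a finset
  set Kf : Finset G := univ.filter (fun g : G => g * y = y * g) with hKdef
  have hmemK : ∀ g : G, g ∈ Kf ↔ g * y = y * g := by intro g; simp [hKdef]
  -- Kf has at least 2m elements
  have hKlow : 2 * m ≤ Kf.card := by
    have hsub : T.image (fun x => x₀ * x) ⊆ Kf := by
      intro g hg
      obtain ⟨x, hxT, rfl⟩ := mem_image.mp hg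
      have hxS := (hmemS _).mp ((hmemT _).mp hxT).1
      have hxyS := (hmemS _).mp ((hmemT _).mp hxT).2
      have hxinv : x * y * x = y⁻¹ := hinv _ hxS hxyS
      have hxx : x * x = 1 := by rw [← pow_two]; exact hxS
      have e : x * y * x = x₀ * y * x₀ := by rw [hxinv, hx₀inv]
      rw [hmemK]
      have e2 : x₀ * (x * y * x) * x = x₀ * (x₀ * y * x₀) * x := by rw [e]
      calc x₀ * x * y = x₀ * (x * y * x) * x := by
            simp only [mul_assoc, hxx, mul_one]
        _ = x₀ * (x₀ * y * x₀) * x := e2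
        _ = y * (x₀ * x) := by
            simp only [← mul_assoc]
            rw [hx₀x₀, one_mul]
    have himg : (T.image (fun x => x₀ * x)).card = T.card :=
      card_image_of_injective _ (mul_right_injective x₀)
    have := card_le_card hsub
    omega
  -- Kf.card divides n
  have hKdvd : Kf.card ∣ n := by
    have h1 : Kf.card = Nat.card (Subgroup.centralizer {y} : Subgroup G) := by
      rw [Nat.card_eq_fintype_card, Fintype.card_subtype]
      congr 1
      ext g
      simp [hmemK g, Subgroup.mem_centralizer_singleton_iff]
    rw [h1]
    have := Subgroup.card_subgroup_dvd_card (Subgroup.centralizer {y} : Subgroup G)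
    simpa [Nat.card_eq_fintype_card] using this
  have hKup : Kf.card < n := by
    have : Kf ⊆ univ.erase x₀ := by
      intro g hg
      rw [mem_erase]
      refine ⟨?_, mem_univ _⟩
      rintro rfl
      exact hx₀nc ((hmemK _).mp hg)
    have := card_le_card this
    have h2 : (univ.erase x₀).card = n - 1 := by
      rw [card_erase_of_mem (mem_univ _), card_univ]
    omega
  have hK2m : Kf.card = 2 * m := by
    obtain ⟨q, hq⟩ := hKdvd
    have hq2 : q = 2 := by
      rcases q with _ | _ | _ | q
      · omega
      · omega
      · rfl
      · exfalso; nlinarith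
    subst hq2; omega
  -- inner counting
  have hyxsq : ∀ x : G, x ∈ Kf → x ^ 2 = 1 → (y * x) ^ 2 = y ^ 2 := by
    intro x hxK hxS
    have hc : x * y = y * x := (hmemK _).mp hxK
    have hxx : x * x = 1 := by rw [← pow_two]; exact hxS
    calc (y * x) ^ 2 = y * (x * y) * x := by rw [pow_two]; simp only [mul_assoc]
      _ = y * (y * x) * x := by rw [hc]
      _ = y * y * (x * x) := by simp only [mul_assoc]
      _ = y ^ 2 := by rw [hxx, mul_one, pow_two]
  have hsubimg : (S ∩ Kf).image (fun x => y * x) ⊆ Kf \ S := by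
    intro g hg
    obtain ⟨x, hx, rfl⟩ := mem_image.mp hg
    obtain ⟨hxS, hxK⟩ := mem_inter.mp hx
    rw [mem_sdiff]
    constructor
    · rw [hmemK]
      have hc : x * y = y * x := (hmemK _).mp hxK
      calc y * x * y = y * (x * y) := by rw [mul_assoc]
        _ = y * (y * x) := by rw [hc]
        _ = y * (y * x) := rfl
    · rw [hmemS]
      rw [hyxsq x hxK ((hmemS _).mp hxS)]
      exact hy
  have himgcard : ((S ∩ Kf).image (fun x => y * x)).card = (S ∩ Kf).card :=
    card_image_of_injective _ (mul_right_injective y)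
  have hc1 : (Kf ∩ S).card + (Kf \ S).card = 2 * m := by
    rw [card_inter_add_card_sdiff, hK2m]
  have hc2 : (S ∩ Kf).card + (S \ Kf).card = 3 * m := by
    rw [card_inter_add_card_sdiff, hs]
  have hc3 : (S \ Kf).card ≤ (univ \ Kf).card := card_le_card (sdiff_subset_sdiff (subset_univ _) (Subset.refl _))
  have hc4 : (univ \ Kf).card = 2 * m := by
    rw [card_sdiff_of_subset (subset_univ _), card_univ, hK2m]; omega
  have hc5 : (S ∩ Kf).card ≤ (Kf \ S).card := himgcard ▸ card_le_card hsubimg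
  have hic : Kf ∩ S = S ∩ Kf := inter_comm _ _
  rw [hic] at hc1
  have hSKcard : (S ∩ Kf).card = m := by omega
  -- every element outside Kf is an involution
  have hout : ∀ z : G, z ∉ Kf → z ^ 2 = 1 := by
    have hEq : S \ Kf = univ \ Kf := by
      apply eq_of_subset_of_card_le (sdiff_subset_sdiff (subset_univ _) (Subset.refl _))
      omega
    intro z hz
    have : z ∈ univ \ Kf := mem_sdiff.mpr ⟨mem_univ _, hz⟩
    rw [← hEq, mem_sdiff] at this
    exact (hmemS _).mp this.1
  -- every non-involution in Kf has square y ^ 2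
  have hin : ∀ z : G, z ∈ Kf → z ^ 2 ≠ 1 → z ^ 2 = y ^ 2 := by
    have hEq : (S ∩ Kf).image (fun x => y * x) = Kf \ S := by
      apply eq_of_subset_of_card_le hsubimg
      omega
    intro z hzK hz2
    have hzmem : z ∈ Kf \ S := mem_sdiff.mpr ⟨hzK, fun hc => hz2 ((hmemS _).mp hc)⟩
    rw [← hEq] at hzmem
    obtain ⟨x, hx, rfl⟩ := mem_image.mp hzmem
    obtain ⟨hxS, hxK⟩ := mem_inter.mp hx
    exact hyxsq x hxK ((hmemS _).mp hxS)
  constructor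
  · intro z hz
    have hzK : z ∈ Kf := by
      by_contra hc
      exact hz (hout z hc)
    exact ⟨(hmemK _).mp hzK, hin z hzK hz⟩
  · exact ⟨x₀, hx₀S, hx₀nc⟩

private def dihPart {G : Type*} [Group G] (y a : G) : DihedralGroup 4 → G
  | .r i => y ^ i.val
  | .sr i => a * y ^ i.val

section dih
variable {G : Type*} [Group G] {y a : G}

private lemma pow_val_add (hy4 : y ^ 4 = 1) (i j : ZMod 4) :
    y ^ (i + j).val = y ^ i.val * y ^ j.val := by
  rw [ZMod.val_add, ← pow_eq_pow_mod _ hy4, pow_add]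

private lemma pow_val_neg (hy4 : y ^ 4 = 1) (i : ZMod 4) :
    y ^ (-i).val = (y ^ i.val)⁻¹ := by
  have h : y ^ i.val * y ^ (-i).val = 1 := by
    rw [← pow_val_add hy4 i (-i)]
    simp
  exact eq_inv_of_mul_eq_one_right ((mul_eq_one_iff_eq_inv.mp h) ▸ h)

private lemma ha_pow (hrel : a * y = y⁻¹ * a) (v : ℕ) :
    a * y ^ v = (y ^ v)⁻¹ * a := by
  induction v with
  | zero => simp
  | succ v ih =>
    calc a * y ^ (v + 1) = (a * y ^ v) * y := by rw [pow_succ, mul_assoc]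
      _ = (y ^ v)⁻¹ * (a * y) := by rw [ih, mul_assoc]
      _ = (y ^ v)⁻¹ * (y⁻¹ * a) := by rw [hrel]
      _ = (y * y ^ v)⁻¹ * a := by rw [mul_inv_rev, mul_assoc]
      _ = (y ^ (v + 1))⁻¹ * a := by rw [← pow_succ']

end dih

section dih2
variable {G : Type*} [Group G] {y a : G}

private lemma ha_pow' (haa : a * a = 1) (hrel : a * y = y⁻¹ * a) (v : ℕ) :
    y ^ v * a = a * (y ^ v)⁻¹ := by
  have h := congrArg (fun t => y ^ v * t * (y ^ v)⁻¹) (ha_pow hrel v)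
  simpa [mul_assoc] using h

private lemma dihPart_mul (haa : a * a = 1) (hrel : a * y = y⁻¹ * a) (hy4 : y ^ 4 = 1)
    (d₁ d₂ : DihedralGroup 4) :
    dihPart y a (d₁ * d₂) = dihPart y a d₁ * dihPart y a d₂ := by
  rcases d₁ with i | i <;> rcases d₂ with j | j
  · rw [DihedralGroup.r_mul_r]
    exact pow_val_add hy4 i j
  · rw [DihedralGroup.r_mul_sr]
    show a * y ^ (j - i).val = y ^ i.val * (a * y ^ j.val)
    rw [← mul_assoc, ha_pow' haa hrel, mul_assoc, ← pow_val_neg hy4,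
      ← pow_val_add hy4, neg_add_eq_sub]
  · rw [DihedralGroup.sr_mul_r]
    show a * y ^ (i + j).val = (a * y ^ i.val) * y ^ j.val
    rw [pow_val_add hy4, mul_assoc]
  · rw [DihedralGroup.sr_mul_sr]
    show y ^ (j - i).val = (a * y ^ i.val) * (a * y ^ j.val)
    rw [← mul_assoc, mul_assoc a _ a, ha_pow' haa hrel, ← mul_assoc, mul_assoc (a*a),
      haa, one_mul, ← pow_val_neg hy4, ← pow_val_add hy4, neg_add_eq_sub]

end dih2

private lemma comm_inv' {G : Type*} [Group G] {z y : G} (h : z * y = y * z) :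
    z * y⁻¹ = y⁻¹ * z := by
  have h2 := congrArg (fun t => y⁻¹ * t * y⁻¹) h
  simp only [mul_assoc] at h2
  simp only [mul_inv_cancel, inv_mul_cancel_left, mul_one] at h2
  exact h2.symm

private lemma comm_mul' {G : Type*} [Group G] {z u v : G} (h1 : z * u = u * z)
    (h2 : z * v = v * z) : z * (u * v) = (u * v) * z := by
  rw [← mul_assoc, h1, mul_assoc, h2, mul_assoc]

theorem eq_case_miller (G : Type*) [Group G] [Finite G]
    (h : ¬ ∃ k : ℕ, Nonempty (G ≃* Multiplicative (Fin k → ZMod 2)))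
    (heq : 4 * Nat.card {x : G // x ^ 2 = 1} = 3 * Nat.card G) :
    ∃ k : ℕ, Nonempty (G ≃* DihedralGroup 4 × Multiplicative (Fin k → ZMod 2)) := by
  classical
  clear h
  haveI := Fintype.ofFinite G
  have heq' : 4 * (univ.filter (fun x : G => x ^ 2 = 1)).card = 3 * Fintype.card G := by
    rw [← Fintype.card_subtype]
    rwa [Nat.card_eq_fintype_card, Nat.card_eq_fintype_card] at heq
  obtain ⟨y₀, hy₀⟩ : ∃ y : G, y ^ 2 ≠ 1 := by
    by_contra hc
    push_neg at hc
    have hU : (univ.filter (fun x : G => x ^ 2 = 1)) = univ := by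
      apply filter_true_of_mem
      intro x _
      exact hc x
    rw [hU, card_univ] at heq'
    have : 0 < Fintype.card G := Fintype.card_pos
    omega
  have key : ∀ {y : G}, y ^ 2 ≠ 1 →
      (∀ z : G, z ^ 2 ≠ 1 → z * y = y * z ∧ z ^ 2 = y ^ 2) ∧
        ∃ a : G, a ^ 2 = 1 ∧ ¬ a * y = y * a := fun {y} hy => miller_key heq' hy
  obtain ⟨Hcomm, a, haS, hanc⟩ := key hy₀
  have haa : a * a = 1 := by rw [← pow_two]; exact haS
  set c := y₀ ^ 2 with hcdef
  have hc1 : c ≠ 1 := hy₀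
  have hcc : c * c = 1 := by
    by_contra hcon
    have h2 : c ^ 2 ≠ 1 := by rwa [pow_two]
    have h3 := (Hcomm c h2).2
    apply hc1
    have h4 : c * c = c * 1 := by rw [← pow_two, h3, mul_one]
    exact mul_left_cancel h4
  have hsq : ∀ g : G, g ^ 2 = 1 ∨ g ^ 2 = c := fun g => by
    by_cases hg : g ^ 2 = 1
    · exact Or.inl hg
    · exact Or.inr (hcdef ▸ (Hcomm g hg).2)
  have hcent : ∀ g : G, g * c = c * g := by
    intro g
    have hz : (g * y₀ * g⁻¹) ^ 2 = g * c * g⁻¹ := by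
      rw [hcdef, pow_two, pow_two]
      simp only [mul_assoc, inv_mul_cancel_left]
    have hz2 : (g * y₀ * g⁻¹) ^ 2 ≠ 1 := by
      rw [hz]
      intro hcon
      apply hc1
      have h5 := congrArg (fun t => g⁻¹ * t * g) hcon
      simp only [mul_assoc] at h5
      simp only [inv_mul_cancel_left, inv_mul_cancel, mul_one, one_mul] at h5
      simpa using h5
    have h6 := (Hcomm _ hz2).2
    rw [hz] at h6
    have h7 := congrArg (fun t => t * g) h6
    simp only [inv_mul_cancel_right] at h7
    exact h7
  have Lcomm : ∀ g h : G, h * g = g * h ∨ h * g = c * (g * h) := by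
    intro g h
    have hsq2cent : ∀ u w : G, u ^ 2 * w = w * u ^ 2 := by
      intro u w
      rcases hsq u with h1 | h1 <;> rw [h1]
      · simp
      · exact (hcent w).symm
    have e1 : (g * h) * (h * g) = g ^ 2 * h ^ 2 := by
      calc (g * h) * (h * g) = g * (h ^ 2 * g) := by
            rw [pow_two]; simp only [mul_assoc]
        _ = g * (g * h ^ 2) := by rw [hsq2cent h g]
        _ = g ^ 2 * h ^ 2 := by rw [pow_two g]; simp only [mul_assoc]
    have e2 : h * g = (g * h)⁻¹ * (g ^ 2 * h ^ 2) := by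
      rw [← e1, inv_mul_cancel_left]
    have e3 : (g * h)⁻¹ = (g * h) ∨ (g * h)⁻¹ = (g * h) * c := by
      rcases hsq (g * h) with h1 | h1
      · left
        exact inv_eq_of_mul_eq_one_right (by rw [← pow_two]; exact h1)
      · right
        apply inv_eq_of_mul_eq_one_right
        rw [← mul_assoc, ← pow_two, h1, hcc]
    have e4 : g ^ 2 * h ^ 2 = 1 ∨ g ^ 2 * h ^ 2 = c := by
      rcases hsq g with h1 | h1 <;> rcases hsq h with h2 | h2 <;> rw [h1, h2]
      · left; rw [one_mul]
      · right; rw [one_mul]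
      · right; rw [mul_one]
      · left; exact hcc
    rcases e3 with e3 | e3 <;> rcases e4 with e4 | e4
    · left; rw [e2, e3, e4, mul_one]
    · right; rw [e2, e3, e4]; exact hcent _
    · right; rw [e2, e3, e4, mul_one]; exact hcent _
    · left; rw [e2, e3, e4, mul_assoc, hcc, mul_one]
  have hya : y₀ * a = c * (a * y₀) := by
    rcases Lcomm a y₀ with h1 | h1
    · exact absurd h1.symm hanc
    · exact h1
  have hy₀inv : y₀⁻¹ = c * y₀ := by
    apply inv_eq_of_mul_eq_one_right
    rw [hcdef, pow_two]
    calc y₀ * (y₀ * y₀ * y₀) = (y₀ * y₀) * (y₀ * y₀) := by simp only [mul_assoc]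
      _ = 1 := by rw [← pow_two y₀, ← hcdef, hcc]
  have hrel : a * y₀ = y₀⁻¹ * a := by
    rw [hy₀inv, mul_assoc, hya, ← mul_assoc, hcc, one_mul]
  have hcyi : c * y₀⁻¹ = y₀ := by
    rw [hy₀inv, ← mul_assoc, hcc, one_mul]
  have hayi : a * y₀⁻¹ = y₀ * a := by
    have h1 : y₀ * (a * y₀) = a := by rw [hrel, mul_inv_cancel_left]
    calc a * y₀⁻¹ = y₀ * (a * y₀) * y₀⁻¹ := by rw [h1]
      _ = y₀ * a := by rw [mul_assoc, mul_assoc, mul_inv_cancel, mul_one]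
  have hy₀4 : y₀ ^ 4 = 1 := by
    have : y₀ ^ 4 = c * c := by rw [hcdef, ← pow_add]
    rw [this, hcc]
  have Hpair : ∀ y z : G, y ^ 2 ≠ 1 → z ^ 2 ≠ 1 → z * y = y * z :=
    fun y z hy hz => ((key hy).1 z hz).1
  have Hnc : ∀ y : G, y ^ 2 ≠ 1 → (∀ g : G, y * g = g * y) → False := by
    intro y hy hcentral
    obtain ⟨_, a', _, ha'⟩ := key hy
    exact ha' (hcentral a').symm
  have hy₀2 : y₀ ^ 2 ≠ 1 := by rw [← hcdef]; exact hc1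
  have hysq : ∀ p : G, p * y₀ = y₀ * p → p ^ 2 = 1 → (y₀ * p) ^ 2 = c := by
    intro p hpc hp
    have hpp : p * p = 1 := by rw [← pow_two]; exact hp
    calc (y₀ * p) ^ 2 = y₀ * ((p * y₀) * p) := by
          rw [pow_two]; simp only [mul_assoc]
      _ = y₀ * ((y₀ * p) * p) := by rw [hpc]
      _ = (y₀ * y₀) * (p * p) := by simp only [mul_assoc]
      _ = c := by rw [hpp, mul_one, ← pow_two y₀, ← hcdef]
  have hK1 : ∀ q : G, q * y₀ = y₀ * q → ∀ z : G, z ^ 2 ≠ 1 → z * q = q * z := by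
    intro q hq z hz
    by_cases hq2 : q ^ 2 = 1
    · have h1 : (y₀ * q) ^ 2 ≠ 1 := by rw [hysq q hq hq2]; exact hc1
      have h2 : z * (y₀ * q) = (y₀ * q) * z := Hpair _ _ h1 hz
      have h3 : z * y₀ = y₀ * z := Hpair _ _ hy₀2 hz
      have h4 : z * y₀⁻¹ = y₀⁻¹ * z := comm_inv' h3
      have h5 := comm_mul' h4 h2
      rwa [inv_mul_cancel_left] at h5
    · exact Hpair _ _ hq2 hz
  have hKab : ∀ p q : G, p * y₀ = y₀ * p → q * y₀ = y₀ * q → p * q = q * p := by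
    intro p q hp hq
    by_cases hp2 : p ^ 2 = 1
    · by_cases hq2 : q ^ 2 = 1
      · have h1 : (y₀ * p) ^ 2 ≠ 1 := by rw [hysq p hp hp2]; exact hc1
        have h2 : (y₀ * q) ^ 2 ≠ 1 := by rw [hysq q hq hq2]; exact hc1
        have h3 : (y₀ * q) * (y₀ * p) = (y₀ * p) * (y₀ * q) := Hpair _ _ h1 h2
        have e : ∀ u v : G, u * y₀ = y₀ * u →
            (y₀ * u) * (y₀ * v) = (y₀ * y₀) * (u * v) := by
          intro u v hu
          calc (y₀ * u) * (y₀ * v) = y₀ * ((u * y₀) * v) := by simp only [mul_assoc]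
            _ = y₀ * ((y₀ * u) * v) := by rw [hu]
            _ = (y₀ * y₀) * (u * v) := by simp only [mul_assoc]
        rw [e q p hq, e p q hp] at h3
        exact (mul_left_cancel h3).symm
      · exact (hK1 p hp q hq2).symm
    · exact hK1 q hq p hp2
  have hcoset : ∀ g : G, ¬ g * y₀ = y₀ * g → (a * g) * y₀ = y₀ * (a * g) := by
    intro g hg
    have h1 : g * y₀ = c * (y₀ * g) := by
      rcases Lcomm y₀ g with h1 | h1
      · exact absurd h1 hg
      · exact h1
    calc (a * g) * y₀ = a * (g * y₀) := by rw [mul_assoc]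
      _ = (a * c) * (y₀ * g) := by rw [h1, mul_assoc]
      _ = (c * a) * (y₀ * g) := by rw [hcent a]
      _ = c * ((a * y₀) * g) := by simp only [mul_assoc]
      _ = c * ((y₀⁻¹ * a) * g) := by rw [hrel]
      _ = (c * y₀⁻¹) * (a * g) := by simp only [mul_assoc]
      _ = y₀ * (a * g) := by rw [hcyi]
  have hNZ : ∀ g : G, g * y₀ = y₀ * g → ¬ g * a = a * g →
      (y₀⁻¹ * g) * y₀ = y₀ * (y₀⁻¹ * g) ∧ (y₀⁻¹ * g) * a = a * (y₀⁻¹ * g) := by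
    intro g hgy hga
    have h1 : g * a = c * (a * g) := by
      rcases Lcomm a g with h1 | h1
      · exact absurd h1 hga
      · exact h1
    constructor
    · calc (y₀⁻¹ * g) * y₀ = y₀⁻¹ * (g * y₀) := by rw [mul_assoc]
        _ = y₀⁻¹ * (y₀ * g) := by rw [hgy]
        _ = y₀ * (y₀⁻¹ * g) := by rw [inv_mul_cancel_left, mul_inv_cancel_left]
    · calc (y₀⁻¹ * g) * a = y₀⁻¹ * (g * a) := by rw [mul_assoc]
        _ = (y₀⁻¹ * c) * (a * g) := by rw [h1, mul_assoc]
        _ = (c * y₀⁻¹) * (a * g) := by rw [hcent y₀⁻¹]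
        _ = (y₀ * a) * g := by rw [hcyi, mul_assoc]
        _ = (a * y₀⁻¹) * g := by rw [← hayi]
        _ = a * (y₀⁻¹ * g) := by rw [mul_assoc]
  have hdec : ∀ g : G, ∃ z : G, (z * y₀ = y₀ * z ∧ z * a = a * z) ∧
      (g = z ∨ g = y₀ * z ∨ g = a * z ∨ g = a * (y₀ * z)) := by
    intro g
    by_cases hgy : g * y₀ = y₀ * g
    · by_cases hga : g * a = a * g
      · exact ⟨g, ⟨hgy, hga⟩, Or.inl rfl⟩
      · obtain ⟨hz1, hz2⟩ := hNZ g hgy hga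
        exact ⟨y₀⁻¹ * g, ⟨hz1, hz2⟩, Or.inr (Or.inl (by rw [mul_inv_cancel_left]))⟩
    · have hgy' := hcoset g hgy
      by_cases hga : (a * g) * a = a * (a * g)
      · exact ⟨a * g, ⟨hgy', hga⟩,
          Or.inr (Or.inr (Or.inl (by rw [← mul_assoc, haa, one_mul])))⟩
      · obtain ⟨hz1, hz2⟩ := hNZ (a * g) hgy' hga
        refine ⟨y₀⁻¹ * (a * g), ⟨hz1, hz2⟩, Or.inr (Or.inr (Or.inr ?_))⟩
        rw [mul_inv_cancel_left, ← mul_assoc, haa, one_mul]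
  have hMZ : ∀ z : G, z * y₀ = y₀ * z → z * a = a * z → ∀ g : G, z * g = g * z := by
    intro z hzy hza g
    obtain ⟨w, ⟨hwy, hwa⟩, hcase⟩ := hdec g
    have hzw : z * w = w * z := hKab z w hzy hwy
    rcases hcase with rfl | rfl | rfl | rfl
    · exact hzw
    · exact comm_mul' hzy hzw
    · exact comm_mul' hza hzw
    · exact comm_mul' hza (comm_mul' hzy hzw)
  have hMsq : ∀ z : G, z * y₀ = y₀ * z → z * a = a * z → z ^ 2 = 1 := by
    intro z h1 h2
    by_contra hz
    exact Hnc z hz (fun g => hMZ z h1 h2 g)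
  -- the center
  have hcZ : c ∈ Subgroup.center G := Subgroup.mem_center_iff.mpr (fun g => hcent g)
  have hZsq : ∀ z : ↥(Subgroup.center G), z * z = 1 := by
    intro z
    have h1 := Subgroup.mem_center_iff.mp z.2
    have h2 := hMsq z ((h1 y₀).symm) ((h1 a).symm)
    apply Subtype.ext
    push_cast
    rw [← pow_two]
    exact h2
  letI : CommGroup ↥(Subgroup.center G) :=
    { (inferInstance : Group ↥(Subgroup.center G)) with
      mul_comm := fun x y => Subtype.ext (Subgroup.mem_center_iff.mp y.2 x) }
  letI : Module (ZMod 2) (Additive ↥(Subgroup.center G)) := AddCommGroup.zmodModule (n := 2) (by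
    intro x
    show (2 : ℕ) • x = 0
    rw [two_nsmul]
    exact hZsq (Additive.toMul x))
  set cV : Additive ↥(Subgroup.center G) :=
    Additive.ofMul (⟨c, hcZ⟩ : ↥(Subgroup.center G)) with hcVdef
  obtain ⟨E, hE⟩ := (Submodule.span (ZMod 2) {cV}).exists_isCompl
  haveI : Module.Finite (ZMod 2) (Additive ↥(Subgroup.center G)) :=
    Module.finite_iff_finite.mpr inferInstance
  haveI : Module.Finite (ZMod 2) ↥E := Module.finite_iff_finite.mpr inferInstance
  refine ⟨Module.finrank (ZMod 2) ↥E, ⟨?_⟩⟩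
  let eE := (Module.finBasis (ZMod 2) ↥E).equivFun
  let j : Multiplicative (Fin (Module.finrank (ZMod 2) ↥E) → ZMod 2) → G := fun v =>
    ((Additive.toMul ((eE.symm (Multiplicative.toAdd v) : ↥E) : Additive ↥(Subgroup.center G)) :
      ↥(Subgroup.center G)) : G)
  have hjmul : ∀ v w, j (v * w) = j v * j w := by
    intro v w
    show ((Additive.toMul ((eE.symm (Multiplicative.toAdd (v * w)) : ↥E) :
        Additive ↥(Subgroup.center G)) : ↥(Subgroup.center G)) : G) =
      ((Additive.toMul ((eE.symm (Multiplicative.toAdd v) : ↥E) :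
        Additive ↥(Subgroup.center G)) : ↥(Subgroup.center G)) : G) *
      ((Additive.toMul ((eE.symm (Multiplicative.toAdd w) : ↥E) :
        Additive ↥(Subgroup.center G)) : ↥(Subgroup.center G)) : G)
    rw [show Multiplicative.toAdd (v * w) =
      Multiplicative.toAdd v + Multiplicative.toAdd w from rfl, map_add]
    rfl
  have hjcent : ∀ v (g : G), j v * g = g * j v := by
    intro v g
    exact (Subgroup.mem_center_iff.mp (SetLike.coe_mem _) g).symm
  have hjinj : ∀ v, j v = 1 → v = 1 := by
    intro v hv
    have h1 : (Additive.toMul ((eE.symm (Multiplicative.toAdd v) : ↥E) :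
        Additive ↥(Subgroup.center G))) = (1 : ↥(Subgroup.center G)) :=
      Subtype.coe_injective hv
    have h2 : ((eE.symm (Multiplicative.toAdd v) : ↥E) :
        Additive ↥(Subgroup.center G)) = 0 := Additive.toMul.injective h1
    have h3 : eE.symm (Multiplicative.toAdd v) = 0 := Submodule.coe_eq_zero.mp h2
    have h4 : Multiplicative.toAdd v = 0 := by
      have h5 := congrArg eE h3
      rwa [LinearEquiv.apply_symm_apply, LinearEquiv.map_zero] at h5
    exact Multiplicative.toAdd.injective h4
  have hjnotc : ∀ v, ¬ j v = c := by
    intro v hv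
    have h1 : (Additive.toMul ((eE.symm (Multiplicative.toAdd v) : ↥E) :
        Additive ↥(Subgroup.center G))) = (⟨c, hcZ⟩ : ↥(Subgroup.center G)) :=
      Subtype.coe_injective hv
    have h2 : ((eE.symm (Multiplicative.toAdd v) : ↥E) :
        Additive ↥(Subgroup.center G)) = cV := Additive.toMul.injective h1
    have h3 : cV ∈ E := h2 ▸ (eE.symm (Multiplicative.toAdd v)).2
    have h4 : cV ∈ Submodule.span (ZMod 2) {cV} := Submodule.mem_span_singleton_self _
    have h5 : cV ∈ (⊥ : Submodule (ZMod 2) (Additive ↥(Subgroup.center G))) := by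
      rw [← hE.inf_eq_bot]
      exact ⟨h4, h3⟩
    have h6 : cV = 0 := (Submodule.mem_bot _).mp h5
    apply hc1
    have h7 := congrArg
      (fun t : Additive ↥(Subgroup.center G) => ((Additive.toMul t : ↥(Subgroup.center G)) : G)) h6
    simpa [hcVdef] using h7
  -- the dihedral part
  have hdih := dihPart_mul haa hrel hy₀4
  have hp3 : y₀ ^ (3 : ℕ) = c * y₀ := by
    rw [pow_succ, ← hcdef]
  have hval0 : ((0 : ZMod 4)).val = 0 := by decide
  have hval1 : ((1 : ZMod 4)).val = 1 := by decide
  have hval2 : ((2 : ZMod 4)).val = 2 := by decide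
  have hval3 : ((3 : ZMod 4)).val = 3 := by decide
  let φ : (DihedralGroup 4 × Multiplicative (Fin (Module.finrank (ZMod 2) ↥E) → ZMod 2)) →* G :=
    MonoidHom.mk' (fun p => dihPart y₀ a p.1 * j p.2) (by
      rintro ⟨d₁, v₁⟩ ⟨d₂, v₂⟩
      show dihPart y₀ a (d₁ * d₂) * j (v₁ * v₂) =
        (dihPart y₀ a d₁ * j v₁) * (dihPart y₀ a d₂ * j v₂)
      rw [hdih, hjmul]
      calc dihPart y₀ a d₁ * dihPart y₀ a d₂ * (j v₁ * j v₂)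
          = dihPart y₀ a d₁ * ((dihPart y₀ a d₂ * j v₁) * j v₂) := by simp only [mul_assoc]
        _ = dihPart y₀ a d₁ * ((j v₁ * dihPart y₀ a d₂) * j v₂) := by
            rw [hjcent v₁ (dihPart y₀ a d₂)]
        _ = (dihPart y₀ a d₁ * j v₁) * (dihPart y₀ a d₂ * j v₂) := by simp only [mul_assoc])
  have hφapp : ∀ d v, φ (d, v) = dihPart y₀ a d * j v := fun _ _ => rfl
  have hφinj : Function.Injective φ := by
    refine (injective_iff_map_eq_one φ).mpr ?_
    rintro ⟨d, v⟩ hp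
    have hp' : dihPart y₀ a d * j v = 1 := hp
    have hcentd : ∀ g : G, dihPart y₀ a d * g = g * dihPart y₀ a d := by
      intro g
      have h1 : dihPart y₀ a d = (j v)⁻¹ := eq_inv_iff_mul_eq_one.mpr hp'
      rw [h1]
      exact (comm_inv' (hjcent v g).symm).symm
    rcases d with i | i
    · have hlt : i.val < 4 := ZMod.val_lt i
      have hiv : i.val = 0 ∨ i.val = 1 ∨ i.val = 2 ∨ i.val = 3 := by omega
      rcases hiv with hiv | hiv | hiv | hiv
      · have hd : dihPart y₀ a (.r i) = 1 := by
          show y₀ ^ i.val = 1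
          rw [hiv, pow_zero]
        rw [hd, one_mul] at hp'
        have hv1 := hjinj v hp'
        have hi0 : i = 0 := (ZMod.val_eq_zero i).mp hiv
        rw [hv1, hi0]
        rfl
      · exfalso
        have hd : dihPart y₀ a (.r i) = y₀ := by
          show y₀ ^ i.val = y₀
          rw [hiv, pow_one]
        apply hanc
        have h1 := hcentd a
        rw [hd] at h1
        exact h1.symm
      · exfalso
        have hd : dihPart y₀ a (.r i) = c := by
          show y₀ ^ i.val = c
          rw [hiv, ← hcdef]
        rw [hd] at hp'
        apply hjnotc v
        have h2 : c * (c * j v) = c * 1 := by rw [hp']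
        rwa [← mul_assoc, hcc, one_mul, mul_one] at h2
      · exfalso
        have hd : dihPart y₀ a (.r i) = c * y₀ := by
          show y₀ ^ i.val = c * y₀
          rw [hiv, hp3]
        apply hanc
        have h1 := hcentd a
        rw [hd] at h1
        have h2 : c * (y₀ * a) = c * (a * y₀) := by
          calc c * (y₀ * a) = (c * y₀) * a := by rw [mul_assoc]
            _ = a * (c * y₀) := h1
            _ = (a * c) * y₀ := by rw [mul_assoc]
            _ = (c * a) * y₀ := by rw [hcent a]
            _ = c * (a * y₀) := by rw [mul_assoc]
        exact (mul_left_cancel h2).symm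
    · exfalso
      have h1 := hcentd y₀
      have hd : dihPart y₀ a (.sr i) = a * y₀ ^ i.val := rfl
      rw [hd] at h1
      have hpowc : y₀ ^ i.val * y₀ = y₀ * y₀ ^ i.val := by
        rw [← pow_succ, ← pow_succ']
      apply hanc
      have h2 : (a * y₀) * y₀ ^ i.val = (y₀ * a) * y₀ ^ i.val := by
        calc (a * y₀) * y₀ ^ i.val = a * (y₀ * y₀ ^ i.val) := by rw [mul_assoc]
          _ = a * (y₀ ^ i.val * y₀) := by rw [hpowc]
          _ = (a * y₀ ^ i.val) * y₀ := by rw [mul_assoc]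
          _ = y₀ * (a * y₀ ^ i.val) := h1
          _ = (y₀ * a) * y₀ ^ i.val := by rw [mul_assoc]
      exact mul_right_cancel h2
  have hφsurj : Function.Surjective φ := by
    intro g
    obtain ⟨z, ⟨hzy, hza⟩, hcase⟩ := hdec g
    have hzZ : z ∈ Subgroup.center G :=
      Subgroup.mem_center_iff.mpr (fun g' => (hMZ z hzy hza g').symm)
    have hv : (Additive.ofMul (⟨z, hzZ⟩ : ↥(Subgroup.center G))) ∈
        (Submodule.span (ZMod 2) {cV}) ⊔ E := by
      rw [hE.sup_eq_top]
      exact Submodule.mem_top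
    obtain ⟨l, hl, e, he, hle⟩ := Submodule.mem_sup.mp hv
    obtain ⟨r, hr⟩ := Submodule.mem_span_singleton.mp hl
    set w : Multiplicative (Fin (Module.finrank (ZMod 2) ↥E) → ZMod 2) :=
      Multiplicative.ofAdd (eE ⟨e, he⟩) with hwdef
    have hw : j w = ((Additive.toMul e : ↥(Subgroup.center G)) : G) := by
      show ((Additive.toMul ((eE.symm (Multiplicative.toAdd w) : ↥E) :
        Additive ↥(Subgroup.center G)) : ↥(Subgroup.center G)) : G) = _
      rw [hwdef, show Multiplicative.toAdd (Multiplicative.ofAdd (eE ⟨e, he⟩)) =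
        eE ⟨e, he⟩ from rfl, LinearEquiv.symm_apply_apply]
    have hr01 : ∀ t : ZMod 2, t = 0 ∨ t = 1 := by decide
    rcases hr01 r with h0 | h1
    · rw [h0, zero_smul] at hr
      rw [← hr, zero_add] at hle
      have hez : ((Additive.toMul e : ↥(Subgroup.center G)) : G) = z := by
        rw [hle]
        rfl
      rcases hcase with h | h | h | h
      · refine ⟨(DihedralGroup.r 0, w), ?_⟩
        rw [hφapp, h]
        show y₀ ^ (0 : ZMod 4).val * j w = z
        rw [hval0, pow_zero, one_mul, hw, hez]
      · refine ⟨(DihedralGroup.r 1, w), ?_⟩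
        rw [hφapp, h]
        show y₀ ^ (1 : ZMod 4).val * j w = y₀ * z
        rw [hval1, pow_one, hw, hez]
      · refine ⟨(DihedralGroup.sr 0, w), ?_⟩
        rw [hφapp, h]
        show (a * y₀ ^ (0 : ZMod 4).val) * j w = a * z
        rw [hval0, pow_zero, mul_one, hw, hez]
      · refine ⟨(DihedralGroup.sr 1, w), ?_⟩
        rw [hφapp, h]
        show (a * y₀ ^ (1 : ZMod 4).val) * j w = a * (y₀ * z)
        rw [hval1, pow_one, hw, hez, mul_assoc]
    · rw [h1, one_smul] at hr
      rw [← hr] at hle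
      have hez : c * ((Additive.toMul e : ↥(Subgroup.center G)) : G) = z := by
        have h7 := congrArg
          (fun t : Additive ↥(Subgroup.center G) =>
            ((Additive.toMul t : ↥(Subgroup.center G)) : G)) hle
        simpa [hcVdef] using h7
      rcases hcase with h | h | h | h
      · refine ⟨(DihedralGroup.r 2, w), ?_⟩
        rw [hφapp, h]
        show y₀ ^ (2 : ZMod 4).val * j w = z
        rw [hval2, ← hcdef, hw, hez]
      · refine ⟨(DihedralGroup.r 3, w), ?_⟩
        rw [hφapp, h]
        show y₀ ^ (3 : ZMod 4).val * j w = y₀ * z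
        rw [hval3, hp3, hw, ← hez, ← mul_assoc, ← hcent y₀, mul_assoc]
      · refine ⟨(DihedralGroup.sr 2, w), ?_⟩
        rw [hφapp, h]
        show (a * y₀ ^ (2 : ZMod 4).val) * j w = a * z
        rw [hval2, ← hcdef, hw, ← hez, mul_assoc]
      · refine ⟨(DihedralGroup.sr 3, w), ?_⟩
        rw [hφapp, h]
        show (a * y₀ ^ (3 : ZMod 4).val) * j w = a * (y₀ * z)
        rw [hval3, hp3, hw, ← hez, mul_assoc, ← mul_assoc y₀ c, ← hcent y₀, mul_assoc]
  exact (MulEquiv.ofBijective φ ⟨hφinj, hφsurj⟩).symm
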